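/- Let c be an admissible coefficient function satisfying (Cubic values), (Normalization), (Separation) and (Symmetry). If a_1 ≥ 2, then for non-negative α with |α| ≤ 3, c(α,1) ≠ 0 if and only if α = e_{1,1}+e_{2,1}+e_{3,1}, and c(e_{1,1}+e_{2,1}+e_{3,1},1) = 1. If 1 = a_1 < a_2 ≤ a_3, then for non-negative α with |α| ≤ 2, c(α,1) ≠ 0 if and only if α = e_{2,1}+e_{3,1}, and c(e_{2,1}+e_{3,1},1) = 1. If 1 = a_1 = a_2 < a_3, then for non-negative α with |α| ≤ 1, c(α,1) ≠ 0 if and only if α = e_{3,1}, and c(e_{3,1},1) = 1. -/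

import Mathlib

/- Common framework: Frobenius manifolds for orbifold projective lines ℙ¹_A,
   following Ishibashi–Shiraishi–Takahashi. -/

namespace FrobeniusUniqueness

/-- A point index `(i, j)` labelling a flat coordinate `t_{i,j}`. -/
abbrev Pt : Type := Fin 3 × ℕ

/-- A non-negative element of `ℤ^{μ_A − 2}`: an exponent vector `α` with `α_{i,j} ∈ ℕ`. -/
abbrev Expv : Type := Pt →₀ ℕ

/-- The standard basis vector `e_{i,j}`. -/
noncomputable def e (i : Fin 3) (j : ℕ) : Expv := Finsupp.single (i, j) 1

/-- The length `|α|` of an exponent vector. -/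
def len (α : Expv) : ℕ := α.sum fun _ n => n

/-- A point index `(i,j)` is valid if `1 ≤ j ≤ a_i − 1`. -/
def ValidPt (A : Fin 3 → ℕ) (p : Pt) : Prop := 1 ≤ p.2 ∧ p.2 ≤ A p.1 - 1

/-- An exponent vector lies in `ℤ^{μ_A − 2}` iff it is supported on valid indices. -/
def Valid (A : Fin 3 → ℕ) (α : Expv) : Prop := ∀ p ∈ α.support, ValidPt A p

/-- The combinatorial factor `s_{a,b,c}`. -/
def sFactor (a b c : ℕ) : ℂ :=
  if a = b ∧ b = c then 6
  else if a ≠ b ∧ b ≠ c ∧ a ≠ c then 1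
  else 2

/-- The index type for the flat coordinates `t_1`, `t_{i,j}`, `t_{μ_A}`. -/
inductive Idx : Type where
  | one : Idx
  | pt : Fin 3 → ℕ → Idx
  | mu : Idx
deriving DecidableEq

/-- Validity of a flat coordinate index. -/
def ValidIdx (A : Fin 3 → ℕ) : Idx → Prop
  | .one => True
  | .pt i j => ValidPt A (i, j)
  | .mu => True

/-- The metric `η` in the frame `∂_1, ∂_{i,j}, ∂_{μ_A}`. -/
noncomputable def eta (A : Fin 3 → ℕ) : Idx → Idx → ℂ
  | .one, .mu => 1
  | .mu, .one => 1
  | .pt i j, .pt i' j' =>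
      if i = i' ∧ j + j' = A i ∧ 1 ≤ j ∧ j ≤ A i - 1 then (A i : ℂ)⁻¹ else 0
  | _, _ => 0

/-- The point indices occurring in an `Idx`. -/
def ptsOf : Idx → List Pt
  | .pt i j => [(i, j)]
  | _ => []

/-- The number of occurrences of `μ_A` in an `Idx`. -/
def muCount : Idx → ℕ
  | .mu => 1
  | _ => 0

/-- The factor produced when the monomial `t^{β + Σ_{p ∈ ps} e_p}` is differentiated by
`∏_{p ∈ ps} ∂_p`, leaving the monomial `t^β`. -/
noncomputable def dfac (β : Expv) : List Pt → ℕ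
  | [] => 1
  | p :: ps =>
      ((β + ((ps.map fun q => (Finsupp.single q 1 : Expv)).sum) + Finsupp.single p 1 : Expv) p)
        * dfac β ps

/-- `der A c a b d β m` is the coefficient of `t^β · e^{m·t_{μ_A}}` in `∂_a ∂_b ∂_d F`, where
`F = (1/2)t_1²t_{μ_A} + (1/2)t_1·Σ_{i,j}(1/a_i)t_{i,j}t_{i,a_i−j} + Σ_{α,m} c(α,m)t^α e^{m t_{μ_A}}`
is the potential of the coefficient function `c`.  In particular `∂_1∂_a∂_b F = η(∂_a,∂_b)`. -/
noncomputable def der (A : Fin 3 → ℕ) (c : Expv → ℕ → ℂ) (a b d : Idx) (β : Expv) (m : ℕ) : ℂ :=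
  if a = .one then (if β = 0 ∧ m = 0 then eta A b d else 0)
  else if b = .one then (if β = 0 ∧ m = 0 then eta A a d else 0)
  else if d = .one then (if β = 0 ∧ m = 0 then eta A a b else 0)
  else
    (m : ℂ) ^ (muCount a + muCount b + muCount d) *
      (dfac β (ptsOf a ++ ptsOf b ++ ptsOf d) : ℂ) *
      c (β + (((ptsOf a ++ ptsOf b ++ ptsOf d).map fun q => (Finsupp.single q 1 : Expv)).sum)) m

/-- The coefficient of `t^β · e^{m·t_{μ_A}}` in
`Σ_{σ,τ} ∂_a∂_b∂_σF · η^{στ} · ∂_τ∂_d∂_e F`, where `(η^{στ})` is the inverse matrix of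
`(η_{στ})` (so the only nonzero entries are `η^{1,μ_A} = η^{μ_A,1} = 1` and
`η^{(i,j),(i,a_i−j)} = a_i`). -/
noncomputable def quadTerm (A : Fin 3 → ℕ) (c : Expv → ℕ → ℂ) (a b d e' : Idx)
    (β : Expv) (m : ℕ) : ℂ :=
  ∑ x ∈ Finset.HasAntidiagonal.antidiagonal β, ∑ y ∈ Finset.HasAntidiagonal.antidiagonal m,
    (der A c a b .one x.1 y.1 * der A c .mu d e' x.2 y.2
     + der A c a b .mu x.1 y.1 * der A c .one d e' x.2 y.2
     + ∑ i : Fin 3, ∑ j ∈ Finset.Icc 1 (A i - 1),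
         (A i : ℂ) * der A c a b (.pt i j) x.1 y.1 * der A c (.pt i (A i - j)) d e' x.2 y.2)

/-- `χ_A = 1/a_1 + 1/a_2 + 1/a_3 − 1`. -/
noncomputable def chi (A : Fin 3 → ℕ) : ℚ := (A 0 : ℚ)⁻¹ + (A 1 : ℚ)⁻¹ + (A 2 : ℚ)⁻¹ - 1

/-- The degree of the monomial `t^α`: `Σ_{i,j} α_{i,j}·(a_i − j)/a_i`. -/
noncomputable def deg (A : Fin 3 → ℕ) (α : Expv) : ℚ :=
  α.sum fun p n => (n : ℚ) * (((A p.1 : ℚ) - (p.2 : ℚ)) / (A p.1 : ℚ))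

/-- A coefficient function is admissible if it satisfies (Homogeneity) and the WDVV
equations (coefficientwise, in the variables `t_{i,j}` and `e^{t_{μ_A}}`). -/
structure IsAdmissible (A : Fin 3 → ℕ) (c : Expv → ℕ → ℂ) : Prop where
  homog : ∀ α : Expv, Valid A α → ∀ m : ℕ, c α m ≠ 0 → deg A α + (m : ℚ) * chi A = 2
  wdvv : ∀ a b d e' : Idx, ValidIdx A a → ValidIdx A b → ValidIdx A d → ValidIdx A e' →
      ∀ β : Expv, Valid A β → ∀ m : ℕ,
        quadTerm A c a b d e' β m = quadTerm A c a d b e' β m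

/-- (Cubic values). -/
def CubicValues (A : Fin 3 → ℕ) (c : Expv → ℕ → ℂ) : Prop :=
  (∀ (i₁ i₂ i₃ : Fin 3) (j₁ j₂ j₃ : ℕ),
      ValidPt A (i₁, j₁) → ValidPt A (i₂, j₂) → ValidPt A (i₃, j₃) →
      ¬(i₁ = i₂ ∧ i₂ = i₃) → c (e i₁ j₁ + e i₂ j₂ + e i₃ j₃) 0 = 0) ∧
  (∀ (i : Fin 3) (j₁ j₂ j₃ : ℕ),
      ValidPt A (i, j₁) → ValidPt A (i, j₂) → ValidPt A (i, j₃) →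
      sFactor j₁ j₂ j₃ * c (e i j₁ + e i j₂ + e i j₃) 0 =
        if j₁ + j₂ + j₃ = A i then (A i : ℂ)⁻¹ else 0)

/-- (Normalization). -/
def Normalization (A : Fin 3 → ℕ) (c : Expv → ℕ → ℂ) : Prop :=
  (2 ≤ A 0 → c (e 0 1 + e 1 1 + e 2 1) 1 = 1) ∧
  (A 0 = 1 → A 0 < A 1 → c (e 1 1 + e 2 1) 1 = 1) ∧
  (A 0 = 1 → A 1 = 1 → A 1 < A 2 → c (e 2 1) 1 = 1) ∧
  (A 0 = 1 → A 1 = 1 → A 2 = 1 → c 0 1 = 1)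

/-- (Separation). -/
def Separation (A : Fin 3 → ℕ) (c : Expv → ℕ → ℂ) : Prop :=
  ∀ γ : Expv, Valid A γ →
    ∀ (i₁ i₂ : Fin 3) (j₁ j₂ : ℕ), i₁ ≠ i₂ → ValidPt A (i₁, j₁) → ValidPt A (i₂, j₂) →
      e i₁ j₁ + e i₂ j₂ ≤ γ → c γ 0 = 0

/-- The automorphism of `ℤ^{μ_A−2}` exchanging `e_{i₁,j}` and `e_{i₂,j}` for all `j`. -/
def swapExp (i₁ i₂ : Fin 3) (α : Expv) : Expv :=
  Finsupp.equivMapDomain ((Equiv.swap i₁ i₂).prodCongr (Equiv.refl ℕ)) α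

/-- (Symmetry). -/
def Symmetry (A : Fin 3 → ℕ) (c : Expv → ℕ → ℂ) : Prop :=
  ∀ i₁ i₂ : Fin 3, A i₁ = A i₂ → ∀ α : Expv, Valid A α → ∀ m : ℕ,
    c (swapExp i₁ i₂ α) m = c α m


-- Stage 1 helpers


lemma fin3_cases : ∀ x : Fin 3, x = 0 ∨ x = 1 ∨ x = 2 := by decide

lemma fin3_avoid2 : ∀ x y : Fin 3, ∃ k : Fin 3, k ≠ x ∧ k ≠ y := by decide

lemma fin3_perm : ∀ a b c : Fin 3, a ≠ b → a ≠ c → b ≠ c →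
    (a=0∧b=1∧c=2)∨(a=0∧b=2∧c=1)∨(a=1∧b=0∧c=2)∨(a=1∧b=2∧c=0)∨(a=2∧b=0∧c=1)∨(a=2∧b=1∧c=0) := by
  decide

lemma fin3_two : ∀ x y : Fin 3, x ≠ 0 → y ≠ 0 → x ≠ y →
    (x = 1 ∧ y = 2) ∨ (x = 2 ∧ y = 1) := by decide

lemma len_add (α β : Expv) : len (α + β) = len α + len β := by
  unfold len
  exact Finsupp.sum_add_index' (fun _ => rfl) (fun _ _ _ => rfl)

lemma len_single (p : Pt) : len (Finsupp.single p 1) = 1 := by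
  unfold len
  rw [Finsupp.sum_single_index rfl]

lemma len_eq_zero {α : Expv} (h : len α = 0) : α = 0 := by
  ext p
  rcases eq_or_ne (α p) 0 with h0 | h0
  · simp [h0]
  · exact absurd ((Finset.sum_eq_zero_iff).mp h p (Finsupp.mem_support_iff.mpr h0)) h0

lemma exists_decomp {α : Expv} {n : ℕ} (h : len α = n + 1) :
    ∃ (p : Pt) (γ : Expv), α = γ + Finsupp.single p 1 ∧ len γ = n ∧
      γ.support ⊆ α.support ∧ p ∈ α.support := by
  have hα : α ≠ 0 := by
    intro h0
    rw [h0] at h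
    simp [len] at h
  obtain ⟨p, hp⟩ := Finsupp.support_nonempty_iff.mpr hα
  have hle : Finsupp.single p 1 ≤ α := by
    rw [Finsupp.single_le_iff]
    exact Nat.one_le_iff_ne_zero.mpr (Finsupp.mem_support_iff.mp hp)
  refine ⟨p, α - Finsupp.single p 1, (tsub_add_cancel_of_le hle).symm, ?_, ?_, hp⟩
  · have := len_add (α - Finsupp.single p 1) (Finsupp.single p 1)
    rw [tsub_add_cancel_of_le hle, len_single, h] at this
    omega
  · exact Finsupp.support_mono tsub_le_self

lemma valid_mono {A : Fin 3 → ℕ} {α γ : Expv} (h : Valid A α) (hs : γ.support ⊆ α.support) :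
    Valid A γ := fun p hp => h p (hs hp)

lemma valid_add {A : Fin 3 → ℕ} {α β : Expv} (hα : Valid A α) (hβ : Valid A β) :
    Valid A (α + β) := by
  intro p hp
  rcases Finset.mem_union.mp (Finsupp.support_add hp) with h | h
  exacts [hα p h, hβ p h]

lemma valid_single {A : Fin 3 → ℕ} {p : Pt} (hp : ValidPt A p) :
    Valid A (Finsupp.single p 1) := by
  intro t ht
  rw [Finsupp.support_single_ne_zero _ one_ne_zero, Finset.mem_singleton] at ht
  rwa [ht]

lemma sFactor_ne_zero (a b c : ℕ) : sFactor a b c ≠ 0 := by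
  unfold sFactor
  split_ifs <;> norm_num


-- Stage 2
lemma cubic_dual (A : Fin 3 → ℕ) (c : Expv → ℕ → ℂ) (hcub : CubicValues A c)
    (k : Fin 3) (hk : 2 ≤ A k) (p q : Pt) (hp : ValidPt A p) (hq : ValidPt A q) :
    c (Finsupp.single p 1 + Finsupp.single q 1 + Finsupp.single ((k, A k - 1) : Pt) 1) 0 = 0 := by
  obtain ⟨p1, p2⟩ := p
  obtain ⟨q1, q2⟩ := q
  have hdual : ValidPt A (k, A k - 1) := ⟨by omega, le_refl _⟩
  by_cases hc : p1 = q1 ∧ q1 = k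
  · obtain ⟨h1, h2⟩ := hc
    subst h1
    subst h2
    obtain ⟨hp1, hp2⟩ := hp
    obtain ⟨hq1, hq2⟩ := hq
    have h := hcub.2 p1 p2 q2 (A p1 - 1) ⟨hp1, hp2⟩ ⟨hq1, hq2⟩ hdual
    rw [if_neg (by omega : ¬ (p2 + q2 + (A p1 - 1) = A p1))] at h
    have hs := sFactor_ne_zero p2 q2 (A p1 - 1)
    have := mul_eq_zero.mp h
    rcases this with h' | h'
    · exact absurd h' hs
    · simpa [e] using h'
  · have h := hcub.1 p1 q1 k p2 q2 (A k - 1) hp hq hdual hc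
    simpa [e] using h

lemma sep_kill (A : Fin 3 → ℕ) (c : Expv → ℕ → ℂ) (hsep : Separation A c)
    (k : Fin 3) (hk : 2 ≤ A k)
    (x2 : Expv) (hx2v : Valid A x2) (hx2k : ∀ t ∈ x2.support, t.1 ≠ k) (hx2 : x2 ≠ 0)
    (p v : Pt) (hp : ValidPt A p) (hv : ValidPt A v) :
    c (x2 + Finsupp.single p 1 + Finsupp.single v 1 + Finsupp.single ((k, A k - 1) : Pt) 1) 0
      = 0 := by
  obtain ⟨w, hw⟩ := Finsupp.support_nonempty_iff.mpr hx2
  have hdual : ValidPt A (k, A k - 1) := ⟨by omega, le_refl _⟩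
  have hval : Valid A (x2 + Finsupp.single p 1 + Finsupp.single v 1 +
      Finsupp.single ((k, A k - 1) : Pt) 1) :=
    valid_add (valid_add (valid_add hx2v (valid_single hp)) (valid_single hv))
      (valid_single hdual)
  refine hsep _ hval w.1 k w.2 (A k - 1) (hx2k w hw) ?_ hdual ?_
  · have := hx2v w hw
    simpa using this
  · have h1 : (Finsupp.single w 1 : Expv) ≤ x2 + Finsupp.single p 1 + Finsupp.single v 1 := by
      calc (Finsupp.single w 1 : Expv) ≤ x2 := by
            rw [Finsupp.single_le_iff]
            exact Nat.one_le_iff_ne_zero.mpr (Finsupp.mem_support_iff.mp hw)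
        _ ≤ x2 + Finsupp.single p 1 + Finsupp.single v 1 := by
            exact le_trans (self_le_add_right _ _) (self_le_add_right _ _)
    have : e w.1 w.2 + e k (A k - 1) ≤ (x2 + Finsupp.single p 1 + Finsupp.single v 1) +
        Finsupp.single ((k, A k - 1) : Pt) 1 := by
      unfold e
      exact add_le_add (by simpa using h1) (le_refl _)
    exact this

lemma czero (A : Fin 3 → ℕ) (c : Expv → ℕ → ℂ) (hA : ∀ i, 1 ≤ A i) (hA2 : 2 ≤ A 2)
    (hadm : IsAdmissible A c) : c 0 1 = 0 := by
  by_contra h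
  have h2 := hadm.homog 0 (fun p hp => by simp at hp) 1 h
  unfold deg at h2
  rw [Finsupp.sum_zero_index] at h2
  unfold chi at h2
  have b0 : (A 0 : ℚ)⁻¹ ≤ 1 := by
    rw [← one_div]
    exact div_le_one_of_le₀ (by exact_mod_cast hA 0) (by positivity)
  have b1 : (A 1 : ℚ)⁻¹ ≤ 1 := by
    rw [← one_div]
    exact div_le_one_of_le₀ (by exact_mod_cast hA 1) (by positivity)
  have b2 : (A 2 : ℚ)⁻¹ ≤ 1/2 := by
    rw [← one_div]
    exact one_div_le_one_div_of_le (by norm_num) (by exact_mod_cast hA2)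
  linarith

lemma case3_len1 (A : Fin 3 → ℕ) (c : Expv → ℕ → ℂ) (hadm : IsAdmissible A c)
    (h0 : A 0 = 1) (h1 : A 1 = 1) (h2 : 2 ≤ A 2) (p : Pt) (hp : ValidPt A p)
    (hc : c (Finsupp.single p 1) 1 ≠ 0) : p = ((2 : Fin 3), 1) := by
  obtain ⟨p1, p2⟩ := p
  obtain ⟨hp1, hp2⟩ := hp
  simp only at hp1 hp2
  have h3 := fin3_cases p1
  have hp12 : p1 = 2 := by
    rcases h3 with h | h | h
    · rw [h] at hp2; omega
    · rw [h] at hp2; omega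
    · exact h
  subst hp12
  have hh := hadm.homog _ (valid_single ⟨hp1, hp2⟩) 1 hc
  unfold deg at hh
  rw [Finsupp.sum_single_index (by simp)] at hh
  unfold chi at hh
  rw [h0, h1] at hh
  simp only [Nat.cast_one, inv_one] at hh
  have hA2 : (0:ℚ) < (A 2 : ℚ) := by
    have : (2:ℚ) ≤ (A 2 : ℚ) := by exact_mod_cast h2
    linarith
  have hp2' : (p2 : ℚ) = 1 := by
    field_simp at hh
    linarith
  have : p2 = 1 := by exact_mod_cast hp2'
  rw [this]
-- Stage 3: quadTerm evaluation
lemma quadTerm_mu_eval (A : Fin 3 → ℕ) (c : Expv → ℕ → ℂ) (u1 v1 w1 : Fin 3) (u2 v2 w2 : ℕ)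
    (β : Expv)
    (H : ∀ ι : Fin 3, ∀ j ∈ Finset.Icc 1 (A ι - 1), ∀ x ∈ Finset.HasAntidiagonal.antidiagonal β,
        der A c (.pt ι (A ι - j)) (.pt v1 v2) (.pt w1 w2) x.2 0 = 0) :
    quadTerm A c .mu (.pt u1 u2) (.pt v1 v2) (.pt w1 w2) β 1
      = ((β (u1, u2) + 1 : ℕ) : ℂ) * c (β + Finsupp.single ((u1, u2) : Pt) 1) 1
          * eta A (.pt v1 v2) (.pt w1 w2) := by
  unfold quadTerm
  trans (∑ x ∈ Finset.HasAntidiagonal.antidiagonal β, if x.2 = 0 then ((β (u1, u2) + 1 : ℕ) : ℂ) *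
      c (β + Finsupp.single ((u1, u2) : Pt) 1) 1 * eta A (.pt v1 v2) (.pt w1 w2) else 0)
  · refine Finset.sum_congr rfl (fun x hx => ?_)
    rw [show (Finset.HasAntidiagonal.antidiagonal 1 : Finset (ℕ × ℕ)) = {(0,1),(1,0)} from by decide]
    rw [Finset.sum_insert (by decide), Finset.sum_singleton]
    have etaz : eta A Idx.mu (Idx.pt u1 u2) = 0 := rfl
    have e1 : der A c .mu (.pt u1 u2) .one x.1 (0,1).1 = 0 := by
      simp [der, etaz]
    have e2 : der A c .mu (.pt u1 u2) .mu x.1 (0,1).1 = 0 := by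
      simp [der, muCount]
    have e3 : der A c .mu (.pt u1 u2) .one x.1 (1,0).1 = 0 := by
      simp [der, etaz]
    have h3 : ∀ (i : Fin 3), ∀ j ∈ Finset.Icc 1 (A i - 1),
        (A i : ℂ) * der A c .mu (.pt u1 u2) (.pt i j) x.1 (0,1).1
          * der A c (.pt i (A i - j)) (.pt v1 v2) (.pt w1 w2) x.2 (0,1).2 = 0 := by
      intro i j hj
      have : der A c .mu (.pt u1 u2) (.pt i j) x.1 0 = 0 := by
        simp [der, muCount]
      rw [this, mul_zero, zero_mul]
    have h4 : ∀ (i : Fin 3), ∀ j ∈ Finset.Icc 1 (A i - 1),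
        (A i : ℂ) * der A c .mu (.pt u1 u2) (.pt i j) x.1 (1,0).1
          * der A c (.pt i (A i - j)) (.pt v1 v2) (.pt w1 w2) x.2 (1,0).2 = 0 := by
      intro i j hj
      rw [H i j hj x hx, mul_zero]
    rw [Finset.sum_congr rfl (fun i _ => Finset.sum_eq_zero (h3 i)),
        Finset.sum_congr rfl (fun i _ => Finset.sum_eq_zero (h4 i))]
    simp only [e1, e2, e3, zero_mul, Finset.sum_const_zero, add_zero, zero_add]
    -- remaining : der mu u mu x.1 1 * der one v w x.2 0 = if ...
    by_cases h0 : x.2 = 0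
    · have hx1 : x.1 = β := by
        rw [Finset.HasAntidiagonal.mem_antidiagonal] at hx
        rw [h0, add_zero] at hx
        exact hx
      rw [if_pos h0, h0, hx1]
      have d1 : der A c .one (.pt v1 v2) (.pt w1 w2) 0 0 = eta A (.pt v1 v2) (.pt w1 w2) := by
        simp [der]
      have d2 : der A c .mu (.pt u1 u2) .mu β 1
          = ((β (u1, u2) + 1 : ℕ) : ℂ) * c (β + Finsupp.single ((u1, u2) : Pt) 1) 1 := by
        simp [der, muCount, ptsOf, dfac]
      rw [d1, d2]
    · rw [if_neg h0]
      have d1 : der A c .one (.pt v1 v2) (.pt w1 w2) x.2 0 = 0 := by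
        simp [der, h0]
      rw [d1, mul_zero]
  · rw [Finset.sum_eq_single_of_mem (β, (0 : Expv))
      (by rw [Finset.HasAntidiagonal.mem_antidiagonal, add_zero]) (fun x hx hne => ?_)]
    · rw [if_pos rfl]
    · rw [Finset.HasAntidiagonal.mem_antidiagonal] at hx
      rw [if_neg]
      intro h0
      apply hne
      rw [h0, add_zero] at hx
      rw [← hx, ← h0]
-- Stage 4: master lemma
lemma master (A : Fin 3 → ℕ) (c : Expv → ℕ → ℂ)
    (hadm : IsAdmissible A c) (hcub : CubicValues A c) (hsep : Separation A c)
    (k : Fin 3) (hk : 2 ≤ A k) (β : Expv) (hβ : Valid A β)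
    (hβk : ∀ p ∈ β.support, p.1 ≠ k) (b : Pt) (hb : ValidPt A b) (hbk : b ≠ ((k, 1) : Pt)) :
    c (β + Finsupp.single b 1) 1 = 0 := by
  have hder : ∀ (v1 : Fin 3) (v2 : ℕ), ValidPt A ((v1, v2) : Pt) →
      ∀ ι : Fin 3, ∀ j ∈ Finset.Icc 1 (A ι - 1), ∀ x ∈ Finset.HasAntidiagonal.antidiagonal β,
      der A c (.pt ι (A ι - j)) (.pt v1 v2) (.pt k (A k - 1)) x.2 0 = 0 := by
    intro v1 v2 hv ι j hj x hx
    rw [Finset.mem_Icc] at hj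
    rw [Finset.HasAntidiagonal.mem_antidiagonal] at hx
    have hι : 2 ≤ A ι := by omega
    have hpv : ValidPt A ((ι, A ι - j) : Pt) :=
      ⟨by show 1 ≤ A ι - j; omega, by show A ι - j ≤ A ι - 1; omega⟩
    have hcc : c (x.2 + Finsupp.single ((ι, A ι - j) : Pt) 1 + Finsupp.single ((v1, v2) : Pt) 1
        + Finsupp.single ((k, A k - 1) : Pt) 1) 0 = 0 := by
      rcases eq_or_ne x.2 0 with h0 | h0
      · rw [h0, zero_add]
        exact cubic_dual A c hcub k hk _ _ hpv hv
      · have hx2le : x.2 ≤ β := hx ▸ le_add_self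
        exact sep_kill A c hsep k hk x.2 (valid_mono hβ (Finsupp.support_mono hx2le))
          (fun t ht => hβk t (Finsupp.support_mono hx2le ht)) h0 _ _ hpv hv
    have hcc' : c (x.2 + (Finsupp.single ((ι, A ι - j) : Pt) 1 +
        (Finsupp.single ((v1, v2) : Pt) 1 + Finsupp.single ((k, A k - 1) : Pt) 1))) 0 = 0 := by
      rw [← add_assoc, ← add_assoc]
      exact hcc
    simp [der, ptsOf, muCount, hcc']
  have hvd : ValidPt A ((k, 1) : Pt) := ⟨by show 1 ≤ 1; omega, by show 1 ≤ A k - 1; omega⟩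
  have hvd2 : ValidPt A ((k, A k - 1) : Pt) := ⟨by show 1 ≤ A k - 1; omega, by show A k - 1 ≤ A k - 1; omega⟩
  have hwd := hadm.wdvv .mu (.pt b.1 b.2) (.pt k 1) (.pt k (A k - 1)) trivial hb hvd hvd2 β hβ 1
  rw [quadTerm_mu_eval A c b.1 k k b.2 1 (A k - 1) β (hder k 1 hvd),
      quadTerm_mu_eval A c k b.1 k 1 b.2 (A k - 1) β (hder b.1 b.2 (by simpa using hb))] at hwd
  have he1 : eta A (.pt k 1) (.pt k (A k - 1)) = (A k : ℂ)⁻¹ := by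
    show (if k = k ∧ 1 + (A k - 1) = A k ∧ 1 ≤ 1 ∧ 1 ≤ A k - 1 then (A k : ℂ)⁻¹ else 0) = _
    rw [if_pos ⟨rfl, by omega, le_refl _, by omega⟩]
  have he2 : eta A (.pt b.1 b.2) (.pt k (A k - 1)) = 0 := by
    show (if b.1 = k ∧ b.2 + (A k - 1) = A b.1 ∧ 1 ≤ b.2 ∧ b.2 ≤ A b.1 - 1
        then (A b.1 : ℂ)⁻¹ else 0) = 0
    rw [if_neg]
    rintro ⟨h1, h2, h3, h4⟩
    rw [h1] at h2
    have hb2 : b.2 = 1 := by omega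
    exact hbk (by rw [← h1, ← hb2])
  rw [he1, he2, mul_zero] at hwd
  have hAk : (A k : ℂ)⁻¹ ≠ 0 := inv_ne_zero (Nat.cast_ne_zero.mpr (by omega))
  have hb1 : ((β (b.1, b.2) + 1 : ℕ) : ℂ) ≠ 0 := Nat.cast_ne_zero.mpr (Nat.succ_ne_zero _)
  rcases mul_eq_zero.mp hwd with h | h
  · rcases mul_eq_zero.mp h with h' | h'
    · exact absurd h' hb1
    · simpa using h'
  · exact absurd h hAk
-- Stage 5: kill lemmas
lemma supp_single_comp {w : Pt} {k : Fin 3} (h : w.1 ≠ k) :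
    ∀ p ∈ (Finsupp.single w 1 : Expv).support, p.1 ≠ k := by
  intro p hp
  rw [Finsupp.support_single_ne_zero _ one_ne_zero, Finset.mem_singleton] at hp
  rwa [hp]

lemma supp_pair_comp {w x : Pt} {k : Fin 3} (hw : w.1 ≠ k) (hx : x.1 ≠ k) :
    ∀ p ∈ (Finsupp.single w 1 + Finsupp.single x 1 : Expv).support, p.1 ≠ k := by
  intro p hp
  rcases Finset.mem_union.mp (Finsupp.support_add hp) with h | h <;>
    rw [Finsupp.support_single_ne_zero _ one_ne_zero, Finset.mem_singleton] at h <;>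
    rw [h]
  exacts [hw, hx]

lemma ne_k1_of_comp {b : Pt} {k : Fin 3} (h : b.1 ≠ k) : b ≠ ((k, 1) : Pt) := by
  intro he
  rw [he] at h
  exact h rfl

lemma kill1 (A : Fin 3 → ℕ) (c : Expv → ℕ → ℂ) (hall : ∀ i, 2 ≤ A i)
    (hadm : IsAdmissible A c) (hcub : CubicValues A c) (hsep : Separation A c) :
    ∀ α : Expv, Valid A α → len α ≤ 3 → α ≠ e 0 1 + e 1 1 + e 2 1 → c α 1 = 0 := by
  intro α hval hlen hne
  have hl : len α = 0 ∨ len α = 1 ∨ len α = 2 ∨ len α = 3 := by omega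
  rcases hl with hl | hl | hl | hl
  · rw [len_eq_zero hl]
    exact czero A c (fun i => by have := hall i; omega) (hall 2) hadm
  · obtain ⟨p, γ, hd, hγ, hsub, hmem⟩ := exists_decomp hl
    have hγ0 : γ = 0 := len_eq_zero hγ
    obtain ⟨k, hk⟩ := (by decide : ∀ x : Fin 3, ∃ k : Fin 3, k ≠ x) p.1
    have := master A c hadm hcub hsep k (hall k) 0 (fun q hq => by simp at hq)
      (fun q hq => by simp at hq) p (hval p hmem) (ne_k1_of_comp (Ne.symm hk))
    rw [hd, hγ0]
    exact this
  · obtain ⟨p, γ, hd, hγ, hsub, hmem⟩ := exists_decomp hl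
    obtain ⟨w, δ, hd2, hδ, hsub2, hmem2⟩ := exists_decomp hγ
    have hδ0 : δ = 0 := len_eq_zero hδ
    have hwv : ValidPt A w := hval w (hsub hmem2)
    have hpv : ValidPt A p := hval p hmem
    obtain ⟨k, hk1, hk2⟩ := fin3_avoid2 w.1 p.1
    have := master A c hadm hcub hsep k (hall k) (Finsupp.single w 1)
      (valid_single hwv) (supp_single_comp (Ne.symm hk1)) p hpv (ne_k1_of_comp (Ne.symm hk2))
    rw [hd, hd2, hδ0, zero_add]
    exact this
  · obtain ⟨p3, γ, hd, hγ, hsub, hmem⟩ := exists_decomp hl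
    obtain ⟨p2, δ, hd2, hδ, hsub2, hmem2⟩ := exists_decomp hγ
    obtain ⟨p1, ε, hd3, hε, hsub3, hmem3⟩ := exists_decomp hδ
    have hε0 : ε = 0 := len_eq_zero hε
    have h3v : ValidPt A p3 := hval p3 hmem
    have h2v : ValidPt A p2 := hval p2 (hsub hmem2)
    have h1v : ValidPt A p1 := hval p1 (hsub (hsub2 hmem3))
    have hα : α = Finsupp.single p1 1 + Finsupp.single p2 1 + Finsupp.single p3 1 := by
      rw [hd, hd2, hd3, hε0, zero_add]
    clear hd hd2 hd3 hsub hsub2 hsub3 hmem hmem2 hmem3 hγ hδ hε hε0 hlen hl hval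
    -- case analysis on components
    by_cases h12 : p1.1 = p2.1
    · obtain ⟨k, hk1, hk2⟩ := fin3_avoid2 p1.1 p3.1
      have := master A c hadm hcub hsep k (hall k) (Finsupp.single p1 1 + Finsupp.single p2 1)
        (valid_add (valid_single h1v) (valid_single h2v))
        (supp_pair_comp (Ne.symm hk1) (h12 ▸ Ne.symm hk1)) p3 h3v (ne_k1_of_comp (Ne.symm hk2))
      rwa [← hα] at this
    · by_cases h13 : p1.1 = p3.1
      · obtain ⟨k, hk1, hk2⟩ := fin3_avoid2 p1.1 p2.1
        have := master A c hadm hcub hsep k (hall k) (Finsupp.single p1 1 + Finsupp.single p3 1)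
          (valid_add (valid_single h1v) (valid_single h3v))
          (supp_pair_comp (Ne.symm hk1) (h13 ▸ Ne.symm hk1)) p2 h2v (ne_k1_of_comp (Ne.symm hk2))
        have heq : Finsupp.single p1 1 + Finsupp.single p3 1 + Finsupp.single p2 1 = α := by
          rw [hα]; abel
        rwa [heq] at this
      · by_cases h23 : p2.1 = p3.1
        · obtain ⟨k, hk1, hk2⟩ := fin3_avoid2 p2.1 p1.1
          have := master A c hadm hcub hsep k (hall k) (Finsupp.single p2 1 + Finsupp.single p3 1)
            (valid_add (valid_single h2v) (valid_single h3v))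
            (supp_pair_comp (Ne.symm hk1) (h23 ▸ Ne.symm hk1)) p1 h1v (ne_k1_of_comp (Ne.symm hk2))
          have heq : Finsupp.single p2 1 + Finsupp.single p3 1 + Finsupp.single p1 1 = α := by
            rw [hα]; abel
          rwa [heq] at this
        · -- all components distinct
          by_cases hj1 : p1.2 = 1
          · by_cases hj2 : p2.2 = 1
            · by_cases hj3 : p3.2 = 1
              · -- α is the target, contradiction
                exfalso
                apply hne
                obtain ⟨a1, j1⟩ := p1
                obtain ⟨a2, j2⟩ := p2
                obtain ⟨a3, j3⟩ := p3
                simp only at hj1 hj2 hj3 h12 h13 h23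
                subst hj1; subst hj2; subst hj3
                rw [hα]
                unfold e
                rcases fin3_perm a1 a2 a3 h12 h13 h23 with
                  ⟨ha,hb,hc⟩|⟨ha,hb,hc⟩|⟨ha,hb,hc⟩|⟨ha,hb,hc⟩|⟨ha,hb,hc⟩|⟨ha,hb,hc⟩ <;>
                  (subst ha; subst hb; subst hc) <;> abel
              · -- p3.2 ≠ 1 : use b := p3, k := p3.1
                have := master A c hadm hcub hsep p3.1 (hall p3.1)
                  (Finsupp.single p1 1 + Finsupp.single p2 1)
                  (valid_add (valid_single h1v) (valid_single h2v))
                  (supp_pair_comp h13 h23) p3 h3v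
                  (fun he => hj3 (by rw [he]))
                rwa [← hα] at this
            · -- p2.2 ≠ 1
              have := master A c hadm hcub hsep p2.1 (hall p2.1)
                (Finsupp.single p1 1 + Finsupp.single p3 1)
                (valid_add (valid_single h1v) (valid_single h3v))
                (supp_pair_comp h12 (fun h => h23 h.symm)) p2 h2v
                (fun he => hj2 (by rw [he]))
              have heq : Finsupp.single p1 1 + Finsupp.single p3 1 + Finsupp.single p2 1 = α := by
                rw [hα]; abel
              rwa [heq] at this
          · -- p1.2 ≠ 1
            have := master A c hadm hcub hsep p1.1 (hall p1.1)
              (Finsupp.single p2 1 + Finsupp.single p3 1)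
              (valid_add (valid_single h2v) (valid_single h3v))
              (supp_pair_comp (fun h => h12 h.symm) (fun h => h13 h.symm)) p1 h1v
              (fun he => hj1 (by rw [he]))
            have heq : Finsupp.single p2 1 + Finsupp.single p3 1 + Finsupp.single p1 1 = α := by
              rw [hα]; abel
            rwa [heq] at this
-- Stage 6: kill2 and main theorem
lemma kill2 (A : Fin 3 → ℕ) (c : Expv → ℕ → ℂ) (h0 : A 0 = 1) (h1 : 2 ≤ A 1) (h2 : 2 ≤ A 2)
    (hadm : IsAdmissible A c) (hcub : CubicValues A c) (hsep : Separation A c) :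
    ∀ α : Expv, Valid A α → len α ≤ 2 → α ≠ e 1 1 + e 2 1 → c α 1 = 0 := by
  intro α hval hlen hne
  have hA1 : ∀ i, 1 ≤ A i := by
    intro i; rcases fin3_cases i with h | h | h <;> subst h <;> omega
  have hcomp : ∀ p : Pt, ValidPt A p → p.1 ≠ 0 := by
    intro p hv hp0
    obtain ⟨ha, hb⟩ := hv
    rw [hp0, h0] at hb
    omega
  have hge : ∀ p : Pt, ValidPt A p → 2 ≤ A p.1 := by
    intro p hv
    rcases fin3_cases p.1 with h | h | h
    · exact absurd h (hcomp p hv)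
    · rw [h]; exact h1
    · rw [h]; exact h2
  have hl : len α = 0 ∨ len α = 1 ∨ len α = 2 := by omega
  rcases hl with hl | hl | hl
  · rw [len_eq_zero hl]
    exact czero A c hA1 h2 hadm
  · obtain ⟨p, γ, hd, hγ, hsub, hmem⟩ := exists_decomp hl
    have hγ0 : γ = 0 := len_eq_zero hγ
    have hpv : ValidPt A p := hval p hmem
    -- choose k ∈ {1,2}, k ≠ p.1
    have hex : ∃ k : Fin 3, k ≠ p.1 ∧ 2 ≤ A k := by
      rcases fin3_cases p.1 with h | h | h
      · exact absurd h (hcomp p hpv)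
      · exact ⟨2, by rw [h]; decide, h2⟩
      · exact ⟨1, by rw [h]; decide, h1⟩
    obtain ⟨k, hk, hk2⟩ := hex
    have := master A c hadm hcub hsep k hk2 0 (fun q hq => by simp at hq)
      (fun q hq => by simp at hq) p hpv (ne_k1_of_comp (Ne.symm hk))
    rw [hd, hγ0]
    exact this
  · obtain ⟨p, γ, hd, hγ, hsub, hmem⟩ := exists_decomp hl
    obtain ⟨w, δ, hd2, hδ, hsub2, hmem2⟩ := exists_decomp hγ
    have hδ0 : δ = 0 := len_eq_zero hδ
    have hwv : ValidPt A w := hval w (hsub hmem2)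
    have hpv : ValidPt A p := hval p hmem
    have hα : α = Finsupp.single w 1 + Finsupp.single p 1 := by
      rw [hd, hd2, hδ0, zero_add]
    by_cases hwp : w.1 = p.1
    · -- same component: pick the other k
      have hex : ∃ k : Fin 3, k ≠ p.1 ∧ 2 ≤ A k := by
        rcases fin3_cases p.1 with h | h | h
        · exact absurd h (hcomp p hpv)
        · exact ⟨2, by rw [h]; decide, h2⟩
        · exact ⟨1, by rw [h]; decide, h1⟩
      obtain ⟨k, hk, hk2⟩ := hex
      have := master A c hadm hcub hsep k hk2 (Finsupp.single w 1)
        (valid_single hwv) (supp_single_comp (hwp ▸ Ne.symm hk)) p hpv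
        (ne_k1_of_comp (Ne.symm hk))
      rwa [← hα] at this
    · -- different components
      by_cases hp2 : p.2 = 1
      · by_cases hw2 : w.2 = 1
        · -- α is the target
          exfalso
          apply hne
          obtain ⟨a1, j1⟩ := w
          obtain ⟨a2, j2⟩ := p
          simp only at hw2 hp2 hwp
          subst hw2; subst hp2
          rw [hα]
          unfold e
          rcases fin3_two a1 a2 (hcomp (a1, 1) hwv) (hcomp (a2, 1) hpv) hwp with
            ⟨ha, hb⟩ | ⟨ha, hb⟩ <;> (subst ha; subst hb)
          · rfl
          · abel
        · -- w.2 ≠ 1 : k := w.1, b := w, β := single p 1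
          have := master A c hadm hcub hsep w.1 (hge w hwv) (Finsupp.single p 1)
            (valid_single hpv) (supp_single_comp (fun h => hwp h.symm)) w hwv
            (fun he => hw2 (by rw [he]))
          have heq : Finsupp.single p 1 + Finsupp.single w 1 = α := by
            rw [hα]; abel
          rwa [heq] at this
      · -- p.2 ≠ 1 : k := p.1, b := p, β := single w 1
        have := master A c hadm hcub hsep p.1 (hge p hpv) (Finsupp.single w 1)
          (valid_single hwv) (supp_single_comp hwp) p hpv
          (fun he => hp2 (by rw [he]))
        rwa [← hα] at this

/-- Proposition 3.8. -/
theorem degree_one_coefficients (A : Fin 3 → ℕ) (hA : ∀ i, 1 ≤ A i) (hA01 : A 0 ≤ A 1) (hA12 : A 1 ≤ A 2)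
    (c : Expv → ℕ → ℂ) (hadm : IsAdmissible A c) (hcub : CubicValues A c)
    (hnorm : Normalization A c) (hsep : Separation A c) (hsym : Symmetry A c) :
    (2 ≤ A 0 →
      (∀ α : Expv, Valid A α → len α ≤ 3 → (c α 1 ≠ 0 ↔ α = e 0 1 + e 1 1 + e 2 1)) ∧
      c (e 0 1 + e 1 1 + e 2 1) 1 = 1) ∧
    (A 0 = 1 → A 0 < A 1 →
      (∀ α : Expv, Valid A α → len α ≤ 2 → (c α 1 ≠ 0 ↔ α = e 1 1 + e 2 1)) ∧
      c (e 1 1 + e 2 1) 1 = 1) ∧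
    (A 0 = 1 → A 1 = 1 → A 1 < A 2 →
      (∀ α : Expv, Valid A α → len α ≤ 1 → (c α 1 ≠ 0 ↔ α = e 2 1)) ∧
      c (e 2 1) 1 = 1) := by
  refine ⟨?_, ?_, ?_⟩
  · intro h2
    have hall : ∀ i, 2 ≤ A i := by
      intro i; rcases fin3_cases i with h | h | h <;> subst h <;> omega
    refine ⟨fun α hval hlen => ⟨fun hc => ?_, fun heq => ?_⟩, hnorm.1 h2⟩
    · by_contra hne
      exact hc (kill1 A c hall hadm hcub hsep α hval hlen hne)
    · rw [heq, hnorm.1 h2]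
      exact one_ne_zero
  · intro h0 h01
    have h1 : 2 ≤ A 1 := by omega
    have h2' : 2 ≤ A 2 := by omega
    refine ⟨fun α hval hlen => ⟨fun hc => ?_, fun heq => ?_⟩, hnorm.2.1 h0 h01⟩
    · by_contra hne
      exact hc (kill2 A c h0 h1 h2' hadm hcub hsep α hval hlen hne)
    · rw [heq, hnorm.2.1 h0 h01]
      exact one_ne_zero
  · intro h0 h1 h12
    have h2' : 2 ≤ A 2 := by omega
    refine ⟨fun α hval hlen => ⟨fun hc => ?_, fun heq => ?_⟩, hnorm.2.2.1 h0 h1 h12⟩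
    · have hl : len α = 0 ∨ len α = 1 := by omega
      rcases hl with hl | hl
      · exfalso
        rw [len_eq_zero hl] at hc
        exact hc (czero A c hA h2' hadm)
      · obtain ⟨p, γ, hd, hγ, _, hmem⟩ := exists_decomp hl
        rw [len_eq_zero hγ, zero_add] at hd
        have := case3_len1 A c hadm h0 h1 h2' p (hval p hmem) (hd ▸ hc)
        rw [hd, this]
        rfl
    · rw [heq, hnorm.2.2.1 h0 h1 h12]
      exact one_ne_zero

end FrobeniusUniqueness
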